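/- arXiv:1803.07303 — 3 statements merged into one kernel-verified Lean document; each statement's English description precedes it below -/
import Mathlib

section
/- The embedding relation on graphs is transitive: if G ≼ H and H ≼ K then G ≼ K. -/
/-- A graph with predicate labels in `L` and an occurrence interval (a set of
naturals) on every edge. -/
structure ShExGraph (L : Type) where
  N : Type
  E : Type
  [fintypeN : Fintype N]
  [fintypeE : Fintype E]
  [deqN : DecidableEq N]
  [deqE : DecidableEq E]
  source : E → N
  target : E → N
  lab : E → L
  occur : E → Set ℕ

attribute [instance] ShExGraph.fintypeN ShExGraph.fintypeE ShExGraph.deqN ShExGraph.deqE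

/-- Point-wise sum of a finite family of sets of naturals:
⊕_{a ∈ s} F a = { Σ_{a ∈ s} g a | g a ∈ F a }.  The empty sum is {0}. -/
def setSum {α : Type} (s : Finset α) (F : α → Set ℕ) : Set ℕ :=
  {x | ∃ g : α → ℕ, (∀ a ∈ s, g a ∈ F a) ∧ x = ∑ a ∈ s, g a}

/-- R ⊆ N_G × N_H is a simulation of G in H if every pair (n,m) ∈ R has a
witness λ from the out-edges of n to the out-edges of m preserving labels,
with related targets, and such that for every out-edge f of m the point-wise
sum of the occurrence intervals of the edges mapped to f is included in the
occurrence interval of f. -/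
def IsSimulation {L : Type} (G H : ShExGraph L) (R : Set (G.N × H.N)) : Prop :=
  ∀ p ∈ R, ∃ lam : {e : G.E // G.source e = p.1} → {f : H.E // H.source f = p.2},
    (∀ e, G.lab e.1 = H.lab (lam e).1) ∧
    (∀ e, (G.target e.1, H.target (lam e).1) ∈ R) ∧
    (∀ f : {f : H.E // H.source f = p.2},
      setSum (Finset.univ.filter (fun e => lam e = f)) (fun e => G.occur e.1)
        ⊆ H.occur f.1)

/-- G ≼ H : there is a simulation of G in H whose domain is all of N_G. -/
def Embeds {L : Type} (G H : ShExGraph L) : Prop :=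
  ∃ R : Set (G.N × H.N), IsSimulation G H R ∧ ∀ n : G.N, ∃ m, (n, m) ∈ R

/-- A simple graph: every occurrence interval is [1;1] and there are no two
distinct edges with the same source, target and label. -/
def IsSimple {L : Type} (G : ShExGraph L) : Prop :=
  (∀ e : G.E, G.occur e = Set.Icc 1 1) ∧
  (∀ e e' : G.E, G.source e = G.source e' → G.target e = G.target e' →
    G.lab e = G.lab e' → e = e')

/-- The embedding relation is transitive: G ≼ H and H ≼ K imply G ≼ K. -/
theorem embeds_trans {L : Type} (G H K : ShExGraph L)
    (h1 : Embeds G H) (h2 : Embeds H K) : Embeds G K := by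
  obtain ⟨R1, hs1, hd1⟩ := h1
  obtain ⟨R2, hs2, hd2⟩ := h2
  refine ⟨{p | ∃ m, (p.1, m) ∈ R1 ∧ (m, p.2) ∈ R2}, ?_, ?_⟩
  · rintro ⟨n, k⟩ ⟨m, hnm, hmk⟩
    obtain ⟨lam1, hlab1, htgt1, hsum1⟩ := hs1 (n, m) hnm
    obtain ⟨lam2, hlab2, htgt2, hsum2⟩ := hs2 (m, k) hmk
    refine ⟨fun e => lam2 (lam1 e), ?_, ?_, ?_⟩
    · intro e; rw [hlab1 e, hlab2 (lam1 e)]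
    · intro e; exact ⟨H.target (lam1 e).1, htgt1 e, htgt2 (lam1 e)⟩
    · intro g' x hx
      obtain ⟨w, hw, rfl⟩ := hx
      apply hsum2 g'
      set s := Finset.univ.filter (fun e => lam2 (lam1 e) = g') with hs
      set t := Finset.univ.filter (fun f => lam2 f = g') with ht
      refine ⟨fun f => ∑ e ∈ Finset.univ.filter (fun e => lam1 e = f), w e, ?_, ?_⟩
      · intro f hf
        apply hsum1 f
        refine ⟨w, ?_, rfl⟩
        intro e he
        apply hw
        simp only [hs, ht, Finset.mem_filter, Finset.mem_univ, true_and] at he hf ⊢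
        rw [he, hf]
      · rw [← Finset.sum_fiberwise_of_maps_to (g := lam1) (t := t)
          (fun e he => by
            simp only [hs, ht, Finset.mem_filter, Finset.mem_univ, true_and] at he ⊢
            exact he) w]
        apply Finset.sum_congr rfl
        intro f hf
        apply Finset.sum_congr _ (fun _ _ => rfl)
        ext e
        simp only [hs, ht, Finset.mem_filter, Finset.mem_univ, true_and] at hf ⊢
        exact ⟨fun h => h.2, fun h => ⟨by rw [h, hf], h⟩⟩
  · intro n
    obtain ⟨m, hm⟩ := hd1 n
    obtain ⟨k, hk⟩ := hd2 m
    exact ⟨k, m, hm, hk⟩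
end

section
/- Typings of a simple graph G with respect to a ShEx schema S are closed under union: if T1 and T2 are valid typings then T1 ∪ T2 is a valid typing. Consequently there exists a unique maximal valid typing of G w.r.t. S. -/
def bagLangUnion {Δ : Type} (L1 L2 : Set (Δ → ℕ)) : Set (Δ → ℕ) :=
  {w | ∃ w1 ∈ L1, ∃ w2 ∈ L2, w = w1 + w2}

def bagLangPow {Δ : Type} (L : Set (Δ → ℕ)) : ℕ → Set (Δ → ℕ)
  | 0 => {0}
  | i + 1 => bagLangUnion L (bagLangPow L i)

/-- Regular bag expressions. -/
inductive RBE (Δ : Type) where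
  | eps : RBE Δ
  | sym (a : Δ) : RBE Δ
  | alt (e1 e2 : RBE Δ) : RBE Δ
  | conc (e1 e2 : RBE Δ) : RBE Δ
  | iter (e : RBE Δ) (I : Set ℕ) : RBE Δ

def RBE.lang {Δ : Type} [DecidableEq Δ] : RBE Δ → Set (Δ → ℕ)
  | .eps => {0}
  | .sym a => {fun b => if b = a then 1 else 0}
  | .alt e1 e2 => e1.lang ∪ e2.lang
  | .conc e1 e2 => bagLangUnion e1.lang e2.lang
  | .iter e I => ⋃ i ∈ I, bagLangPow e.lang i

/-- The language of the signature sign_G^T(n) = ‖_{e ∈ out(n)} (|_{t ∈ T(target e)} lab(e)::t):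
a bag over Σ × Γ belongs to it iff it is obtained by choosing for every out-edge e of n
one type τ(e) ∈ T(target e) and collecting the symbols (lab e, τ e). -/
def signLang {L Γ : Type} [DecidableEq L] [DecidableEq Γ]
    (G : ShExGraph L) (T : Set (G.N × Γ)) (n : G.N) : Set (L × Γ → ℕ) :=
  {w | ∃ τ : G.E → Γ,
    (∀ e, G.source e = n → (G.target e, τ e) ∈ T) ∧
    (∀ c : L × Γ,
      w c = (Finset.univ.filter
        (fun e : G.E => G.source e = n ∧ (G.lab e, τ e) = c)).card)}

/-- A typing T of G w.r.t. a schema δ : Γ → RBE (Σ × Γ) is valid iff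
L(sign_G^T(n)) ∩ L(δ(t)) ≠ ∅ for every (n,t) ∈ T. -/
def ValidTyping {L Γ : Type} [DecidableEq L] [DecidableEq Γ]
    (G : ShExGraph L) (δ : Γ → RBE (L × Γ)) (T : Set (G.N × Γ)) : Prop :=
  ∀ p ∈ T, (signLang G T p.1 ∩ (δ p.2).lang).Nonempty

/-- The maximal typing of G w.r.t. δ: the union of all valid typings. -/
def maxTyping {L Γ : Type} [DecidableEq L] [DecidableEq Γ]
    (G : ShExGraph L) (δ : Γ → RBE (L × Γ)) : Set (G.N × Γ) :=
  {p | ∃ T : Set (G.N × Γ), ValidTyping G δ T ∧ p ∈ T}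

lemma signLang_mono {L Γ : Type} [DecidableEq L] [DecidableEq Γ]
    (G : ShExGraph L) {T T' : Set (G.N × Γ)} (h : T ⊆ T') (n : G.N) :
    signLang G T n ⊆ signLang G T' n := by
  rintro w ⟨τ, hτ, hw⟩
  exact ⟨τ, fun e he => h (hτ e he), hw⟩

/-- Valid typings of a simple graph w.r.t. a ShEx schema are closed under union;
consequently there is a unique maximal valid typing. -/
theorem valid_typing_union_and_maximal {L Γ : Type} [DecidableEq L] [DecidableEq Γ]
    (G : ShExGraph L) (hG : IsSimple G) (δ : Γ → RBE (L × Γ)) :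
    (∀ T1 T2 : Set (G.N × Γ), ValidTyping G δ T1 → ValidTyping G δ T2 →
      ValidTyping G δ (T1 ∪ T2)) ∧
    (∃! Tmax : Set (G.N × Γ), ValidTyping G δ Tmax ∧
      ∀ T : Set (G.N × Γ), ValidTyping G δ T → T ⊆ Tmax) := by
  have hmax : ValidTyping G δ (maxTyping G δ) := by
    rintro p ⟨T, hT, hpT⟩
    obtain ⟨w, hw1, hw2⟩ := hT p hpT
    exact ⟨w, signLang_mono G (fun q hq => show q ∈ maxTyping G δ from ⟨T, hT, hq⟩) p.1 hw1, hw2⟩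
  refine ⟨?_, maxTyping G δ, ⟨hmax, fun T hT q hq => show q ∈ maxTyping G δ from ⟨T, hT, hq⟩⟩, ?_⟩
  · intro T1 T2 h1 h2 p hp
    rcases hp with hp | hp
    · obtain ⟨w, hw1, hw2⟩ := h1 p hp
      exact ⟨w, signLang_mono G Set.subset_union_left p.1 hw1, hw2⟩
    · obtain ⟨w, hw1, hw2⟩ := h2 p hp
      exact ⟨w, signLang_mono G Set.subset_union_right p.1 hw1, hw2⟩
  · rintro T' ⟨hT', hT'max⟩
    apply Set.Subset.antisymm
    · intro q hq; exact ⟨T', hT', hq⟩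
    · rintro q ⟨T, hT, hq⟩; exact hT'max T hT hq
end

section
/- If a compressed graph F satisfies a ShEx schema S, then its unpacking (the simple graph obtained by replicating each node according to edge cardinalities so that each copy has the same outbound neighborhood expanded to multiplicity, and each copy receives at most one incoming edge) also satisfies S. -/
/-- Signature language of a node of a compressed graph F (edges carry singleton
cardinalities `card e`): sign(n) = ‖_{e ∈ out(n)} (|_{t ∈ T(target e)} lab(e)::t)^{card e},
i.e. every out-edge e contributes card e symbols (lab e, t), each with an
independently chosen type t ∈ T(target e). -/
def cSignLang {L Γ : Type} [DecidableEq L] [DecidableEq Γ] [Fintype Γ]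
    (F : ShExGraph L) (card : F.E → ℕ) (T : Set (F.N × Γ)) (n : F.N) :
    Set (L × Γ → ℕ) :=
  {w | ∃ g : F.E → Γ → ℕ,
    (∀ e, F.source e = n →
      (∑ t : Γ, g e t) = card e ∧ (∀ t : Γ, g e t ≠ 0 → (F.target e, t) ∈ T)) ∧
    (∀ c : L × Γ,
      w c = ∑ e ∈ Finset.univ.filter (fun e : F.E => F.source e = n ∧ F.lab e = c.1),
        g e c.2)}

/-- A valid typing of a compressed graph. -/
def cValidTyping {L Γ : Type} [DecidableEq L] [DecidableEq Γ] [Fintype Γ]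
    (F : ShExGraph L) (card : F.E → ℕ) (δ : Γ → RBE (L × Γ)) (T : Set (F.N × Γ)) : Prop :=
  ∀ p ∈ T, (cSignLang F card T p.1 ∩ (δ p.2).lang).Nonempty

/-- The maximal valid typing of a compressed graph. -/
def cMaxTyping {L Γ : Type} [DecidableEq L] [DecidableEq Γ] [Fintype Γ]
    (F : ShExGraph L) (card : F.E → ℕ) (δ : Γ → RBE (L × Γ)) : Set (F.N × Γ) :=
  {p | ∃ T : Set (F.N × Γ), cValidTyping F card δ T ∧ p ∈ T}

/-- U together with the projection `pr : U.N → F.N` is an unpacking of the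
compressed graph F: U is simple, each copy u of a node pr u has, for every
out-edge f of pr u, exactly card f outgoing edges with label lab f leading to
copies of target f, every edge of U comes from an edge of F, and every node of
U has at most one incoming edge. -/
def IsUnpacking {L : Type} [DecidableEq L]
    (U F : ShExGraph L) (card : F.E → ℕ) (pr : U.N → F.N) : Prop :=
  IsSimple U ∧
  (∀ (u : U.N) (f : F.E), F.source f = pr u →
    (Finset.univ.filter (fun e : U.E =>
      U.source e = u ∧ U.lab e = F.lab f ∧ pr (U.target e) = F.target f)).card
      = card f) ∧
  (∀ e : U.E, ∃ f : F.E,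
    F.source f = pr (U.source e) ∧ F.lab f = U.lab e ∧
    F.target f = pr (U.target e)) ∧
  (∀ u : U.N, (Finset.univ.filter (fun e : U.E => U.target e = u)).card ≤ 1)

lemma exists_fiber_aux {α Γ : Type} [DecidableEq α] [DecidableEq Γ] [Fintype Γ]
    [Nonempty Γ] (n : ℕ) :
    ∀ (s : Finset α) (g : Γ → ℕ), s.card = n → ∑ t, g t = n →
    ∃ σ : α → Γ, ∀ t, (s.filter (fun a => σ a = t)).card = g t := by
  induction n with
  | zero =>
    intro s g hs hg
    rw [Finset.card_eq_zero] at hs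
    subst hs
    refine ⟨fun _ => Classical.arbitrary Γ, fun t => ?_⟩
    simp [(Finset.sum_eq_zero_iff.mp hg t (Finset.mem_univ t))]
  | succ n ih =>
    intro s g hs hg
    obtain ⟨a, ha⟩ : s.Nonempty := Finset.card_pos.mp (by omega)
    obtain ⟨t0, ht0⟩ : ∃ t, g t ≠ 0 := by
      by_contra h
      push_neg at h
      simp [h] at hg
    have hsum0 : g t0 + ∑ t ∈ Finset.univ.erase t0, g t = n + 1 := by
      rw [Finset.add_sum_erase _ g (Finset.mem_univ t0)]; exact hg
    obtain ⟨σ', hσ'⟩ := ih (s.erase a) (Function.update g t0 (g t0 - 1))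
      (by rw [Finset.card_erase_of_mem ha, hs]; omega)
      (by
        rw [Finset.sum_update_of_mem (Finset.mem_univ t0)]
        have : ∑ t ∈ Finset.univ \ {t0}, g t = ∑ t ∈ Finset.univ.erase t0, g t := by
          rw [Finset.sdiff_singleton_eq_erase]
        omega)
    refine ⟨Function.update σ' a t0, fun t => ?_⟩
    have hfe : (s.erase a).filter (fun x => Function.update σ' a t0 x = t) =
        (s.erase a).filter (fun x => σ' x = t) := by
      apply Finset.filter_congr
      intro x hx
      rw [Function.update_of_ne (Finset.ne_of_mem_erase hx)]
    by_cases hta : t = t0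
    · subst hta
      rw [← Finset.insert_erase ha, Finset.filter_insert, if_pos (by simp)]
      rw [Finset.card_insert_of_notMem (fun h => (Finset.mem_erase.mp
        (Finset.mem_of_mem_filter _ h)).1 rfl), hfe, hσ' t]
      simp only [Function.update_self]
      omega
    · rw [← Finset.insert_erase ha, Finset.filter_insert,
        if_neg (by simp [Function.update_self]; exact fun h => hta h.symm), hfe, hσ' t]
      simp [Function.update_of_ne hta]

lemma cSignLang_mono {L Γ : Type} [DecidableEq L] [DecidableEq Γ] [Fintype Γ]
    (F : ShExGraph L) (card : F.E → ℕ) {T T' : Set (F.N × Γ)} (h : T ⊆ T') (n : F.N) :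
    cSignLang F card T n ⊆ cSignLang F card T' n := by
  rintro w ⟨g, h1, h2⟩
  exact ⟨g, fun e he => ⟨(h1 e he).1, fun t ht => h ((h1 e he).2 t ht)⟩, h2⟩

lemma cMaxTyping_valid {L Γ : Type} [DecidableEq L] [DecidableEq Γ] [Fintype Γ]
    (F : ShExGraph L) (card : F.E → ℕ) (δ : Γ → RBE (L × Γ)) :
    cValidTyping F card δ (cMaxTyping F card δ) := by
  rintro p ⟨T, hT, hpT⟩
  obtain ⟨w, hw1, hw2⟩ := hT p hpT
  exact ⟨w, cSignLang_mono F card (show T ⊆ cMaxTyping F card δ from fun q hq => ⟨T, hT, hq⟩) p.1 hw1, hw2⟩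

/-- If a compressed graph F satisfies a ShEx schema, then its unpacking also
satisfies the schema. -/
theorem unpacking_satisfies {L Γ : Type} [DecidableEq L] [DecidableEq Γ] [Fintype Γ]
    (F U : ShExGraph L) (card : F.E → ℕ) (pr : U.N → F.N)
    (δ : Γ → RBE (L × Γ))
    (hocc : ∀ e : F.E, F.occur e = Set.Icc (card e) (card e))
    (hcomp : ∀ e e' : F.E, F.source e = F.source e' → F.target e = F.target e' →
      F.lab e = F.lab e' → e = e')
    (hunp : IsUnpacking U F card pr)
    (hsatF : ∀ n : F.N, ∃ t : Γ, (n, t) ∈ cMaxTyping F card δ) :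
    ∀ u : U.N, ∃ t : Γ, (u, t) ∈ maxTyping U δ := by
  intro u0
  have hΓ : Nonempty Γ := ⟨(hsatF (pr u0)).choose⟩
  set TM : Set (F.N × Γ) := cMaxTyping F card δ with hTM
  have hTMvalid : cValidTyping F card δ TM := cMaxTyping_valid F card δ
  set TU : Set (U.N × Γ) := {q | (pr q.1, q.2) ∈ TM} with hTUdef
  -- the edge of F projecting each edge of U
  obtain ⟨hsimple, hcount, hproj, hin⟩ := hunp
  choose φ hφ1 hφ2 hφ3 using hproj
  have hvalid : ValidTyping U δ TU := by
    rintro ⟨u, t⟩ hut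
    obtain ⟨w, hwsign, hwlang⟩ := hTMvalid (pr u, t) hut
    obtain ⟨g, hg1, hg2⟩ := hwsign
    -- the out-edges of u that are copies of f
    set Ef : F.E → Finset U.E := fun f => Finset.univ.filter (fun e : U.E =>
      U.source e = u ∧ U.lab e = F.lab f ∧ pr (U.target e) = F.target f) with hEf
    -- choose a type assignment on each Ef f with fiber sizes g f
    have hexists : ∀ f : F.E, F.source f = pr u →
        ∃ σ : U.E → Γ, ∀ t', ((Ef f).filter (fun e => σ e = t')).card = g f t' := by
      intro f hf
      exact exists_fiber_aux (Ef f).card (Ef f) (g f)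
        rfl (by rw [hcount u f hf]; exact (hg1 f hf).1)
    choose σ hσ using hexists
    classical
    set τ : U.E → Γ := fun e =>
      if hf : F.source (φ e) = pr u then σ (φ e) hf e else t with hτ
    -- each out-edge of u lies in Ef (φ e), and φ e is the unique such f
    have hmem : ∀ e : U.E, U.source e = u → e ∈ Ef (φ e) := by
      intro e he
      simp only [hEf, Finset.mem_filter, Finset.mem_univ, true_and]
      exact ⟨he, (hφ2 e).symm, (hφ3 e).symm⟩
    have hφsrc : ∀ e : U.E, U.source e = u → F.source (φ e) = pr u := by
      intro e he; rw [hφ1 e, he]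
    have huniq : ∀ (e : U.E) (f : F.E), F.source f = pr u → e ∈ Ef f → φ e = f := by
      intro e f hf hef
      simp only [hEf, Finset.mem_filter, Finset.mem_univ, true_and] at hef
      obtain ⟨he, hl, ht⟩ := hef
      exact hcomp (φ e) f (by rw [hφsrc e he, hf]) (by rw [hφ3 e, ht]) (by rw [hφ2 e, hl])
    refine ⟨w, ⟨τ, ?_, ?_⟩, hwlang⟩
    · -- targets get types in TU
      intro e he
      have hf := hφsrc e he
      have hτe : τ e = σ (φ e) hf e := by simp [hτ, hf]
      have hgne : g (φ e) (τ e) ≠ 0 := by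
        rw [← hσ (φ e) hf (τ e)]
        apply Finset.card_ne_zero_of_mem (a := e)
        exact Finset.mem_filter.mpr ⟨hmem e he, hτe.symm⟩
      have := (hg1 (φ e) hf).2 (τ e) hgne
      show (pr (U.target e), τ e) ∈ TM
      rwa [← hφ3 e]
    · -- the counting condition
      rintro ⟨a, b⟩
      rw [hg2 (a, b)]
      have hset : Finset.univ.filter (fun e : U.E => U.source e = u ∧ (U.lab e, τ e) = (a, b))
          = (Finset.univ.filter (fun f : F.E => F.source f = pr u ∧ F.lab f = a)).biUnion
              (fun f => (Ef f).filter (fun e => τ e = b)) := by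
        ext e
        simp only [Finset.mem_filter, Finset.mem_univ, true_and, Finset.mem_biUnion,
          Prod.mk.injEq]
        constructor
        · rintro ⟨he, hl, htc⟩
          exact ⟨φ e, ⟨hφsrc e he, by rw [hφ2 e, hl]⟩, hmem e he, htc⟩
        · rintro ⟨f, ⟨hf, hfl⟩, hEfe, hτc⟩
          have hEfe' := hEfe
          simp only [hEf, Finset.mem_filter, Finset.mem_univ, true_and] at hEfe'
          exact ⟨hEfe'.1, by rw [hEfe'.2.1, hfl], hτc⟩
      rw [hset, Finset.card_biUnion]
      · apply Finset.sum_congr rfl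
        intro f hf
        rw [Finset.mem_filter] at hf
        have hfs := hf.2.1
        have : (Ef f).filter (fun e => τ e = b)
            = (Ef f).filter (fun e => σ f hfs e = b) := by
          apply Finset.filter_congr
          intro e he
          have hes : U.source e = u := by
            simp only [hEf, Finset.mem_filter, Finset.mem_univ, true_and] at he
            exact he.1
          have : φ e = f := huniq e f hfs he
          simp [hτ, this, hfs]
        rw [this, hσ f hfs b]
      · -- disjointness
        intro f hf f' hf' hne
        rw [Finset.mem_coe, Finset.mem_filter] at hf hf'
        simp only [Function.onFun, Finset.disjoint_left]
        intro e he he'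
        rw [Finset.mem_filter] at he he'
        have hes : U.source e = u := by
          simp only [hEf, Finset.mem_filter, Finset.mem_univ, true_and] at he
          exact he.1.1
        exact hne ((huniq e f hf.2.1 he.1).symm.trans (huniq e f' hf'.2.1 he'.1))
  obtain ⟨t, htM⟩ := hsatF (pr u0)
  exact ⟨t, TU, hvalid, htM⟩
end
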